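/- Let f : X → Y be a function of metric spaces, m ≥ 0, and let D⁽ᵐ⁺¹⁾ : (0,∞) × (0,∞) → (0,∞) be an m-dimensional control function of f. Define inductively D⁽ᵏ⁾(r_X, R_Y) = D⁽ᵏ⁻¹⁾(3·r_X, R_Y) + 2·r_X for k > m+1. Then for every k ≥ m+1 the function D⁽ᵏ⁾ is an (m,k)-dimensional control function of f. -/
import Mathlib


open Metric Set

/-- The chain relation generating `r`-components of a subset `A`. -/
def ChainRel {X : Type*} [MetricSpace X] (A : Set X) (r : ℝ) : X → X → Prop :=
  Relation.ReflTransGen (fun a b => b ∈ A ∧ dist a b ≤ r)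

/-- The `r`-components of `A` are `R`-bounded. -/
def CompBounded {X : Type*} [MetricSpace X] (A : Set X) (r R : ℝ) : Prop :=
  ∀ x ∈ A, ∀ y ∈ A, ChainRel A r x y → dist x y ≤ R

/-- The image `f '' A` has diameter at most `RY`. -/
def ImDiamLE {X Y : Type*} [MetricSpace X] [MetricSpace Y] (f : X → Y) (A : Set X)
    (RY : ℝ) : Prop :=
  ∀ x ∈ A, ∀ y ∈ A, dist (f x) (f y) ≤ RY

/-- `D` is an `(m,k)`-dimensional control function of `f : X → Y`: for all `rX, RY > 0`,
every subset `A ⊆ X` whose image has diameter at most `RY` is the union of `k` sets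
whose `rX`-components are `D rX RY`-bounded, such that every point of `A` belongs to at
least `k - m` of the `k` sets. An `m`-dimensional control function of `f` is the case
`k = m + 1`. -/
def IsFnNKControl {X Y : Type*} [MetricSpace X] [MetricSpace Y] (f : X → Y) (m k : ℕ)
    (D : ℝ → ℝ → ℝ) : Prop :=
  ∀ rX > 0, ∀ RY > 0, ∀ A : Set X, ImDiamLE f A RY →
    ∃ C : Fin k → Set X,
      (∀ i, C i ⊆ A) ∧ A ⊆ (⋃ i, C i) ∧
      (∀ i, CompBounded (C i) rX (D rX RY)) ∧
      ∀ x ∈ A, k - m ≤ {i : Fin k | x ∈ C i}.ncard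

/-- If `D (m+1)` is an `m`-dimensional control function of `f` (i.e. an
`(m, m+1)`-dimensional control function) and `D (k+1) rX RY = D k (3 rX) RY + 2 rX` for
`k ≥ m + 1`, then `D k` is an `(m,k)`-dimensional control function of `f` for every
`k ≥ m + 1`. -/
theorem stmt11 {X Y : Type*} [MetricSpace X] [MetricSpace Y] (f : X → Y) (m : ℕ)
    (D : ℕ → ℝ → ℝ → ℝ)
    (hpos : ∀ rX > 0, ∀ RY > 0, 0 < D (m + 1) rX RY)
    (hbase : IsFnNKControl f m (m + 1) (D (m + 1)))
    (hind : ∀ k ≥ m + 1, ∀ rX RY : ℝ, D (k + 1) rX RY = D k (3 * rX) RY + 2 * rX) :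
    ∀ k ≥ m + 1, IsFnNKControl f m k (D k) := by
  intro k hk
  induction k, hk using Nat.le_induction with
  | base => exact hbase
  | succ k hk ih =>
    intro rX hrX RY hRY A hA
    obtain ⟨C, hCsub, hCcov, hCbd, hCmult⟩ := ih (3 * rX) (by linarith) RY hRY A hA
    have hDk : D (k + 1) rX RY = D k (3 * rX) RY + 2 * rX := hind k hk rX RY
    set Fr : Fin k → Set X := fun i => {x | x ∈ A ∧ ∃ a ∈ C i, dist x a ≤ rX} with hFr
    set Rs : Set X := {x | x ∈ A ∧ ∀ i, (∃ a ∈ C i, dist x a ≤ rX) → x ∈ C i} with hRs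
    have hmem : ∀ x ∈ A, ∃ i, x ∈ C i := by
      intro x hx
      have h1 := hCmult x hx
      rcases Set.eq_empty_or_nonempty {i : Fin k | x ∈ C i} with h | ⟨i, hi⟩
      · rw [h, Set.ncard_empty] at h1; omega
      · exact ⟨i, hi⟩
    refine ⟨Fin.snoc Fr Rs, ?_, ?_, ?_, ?_⟩
    · intro j
      refine Fin.lastCases ?_ ?_ j
      · rw [Fin.snoc_last]; intro x hx; exact hx.1
      · intro i; rw [Fin.snoc_castSucc]; intro x hx; exact hx.1
    · intro x hx
      obtain ⟨i, hi⟩ := hmem x hx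
      exact Set.mem_iUnion.2 ⟨Fin.castSucc i,
        by rw [Fin.snoc_castSucc]; exact ⟨hx, x, hi, by simp [hrX.le]⟩⟩
    · intro j
      refine Fin.lastCases ?_ ?_ j
      · rw [Fin.snoc_last]
        intro x hx y hy hchain
        obtain ⟨i, hi⟩ := hmem x hx.1
        have key : ∀ z, ChainRel Rs rX x z → z ∈ C i ∧ ChainRel (C i) (3 * rX) x z := by
          intro z hz
          induction hz with
          | refl => exact ⟨hi, Relation.ReflTransGen.refl⟩
          | @tail b c h1 h2 ih2 =>
            obtain ⟨hbC, hbchain⟩ := ih2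
            have hcC : c ∈ C i := h2.1.2 i ⟨b, hbC, by rw [dist_comm]; exact h2.2⟩
            exact ⟨hcC, hbchain.tail ⟨hcC, le_trans h2.2 (by linarith)⟩⟩
        have hb := hCbd i x hi y (key y hchain).1 (key y hchain).2
        rw [hDk]; linarith
      · intro i; rw [Fin.snoc_castSucc]
        intro x hx y hy hchain
        obtain ⟨ax, haxC, haxd⟩ := hx.2
        have key : ∀ z, ChainRel (Fr i) rX x z →
            ∃ az ∈ C i, dist z az ≤ rX ∧ ChainRel (C i) (3 * rX) ax az := by
          intro z hz
          induction hz with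
          | refl => exact ⟨ax, haxC, haxd, Relation.ReflTransGen.refl⟩
          | @tail b c h1 h2 ih2 =>
            obtain ⟨ab, habC, habd, habchain⟩ := ih2
            obtain ⟨ac, hacC, hacd⟩ := h2.1.2
            refine ⟨ac, hacC, hacd, habchain.tail ⟨hacC, ?_⟩⟩
            have h4 : dist ab ac ≤ dist ab b + dist b c + dist c ac := dist_triangle4 _ _ _ _
            have h5 : dist ab b = dist b ab := dist_comm _ _
            linarith [h2.2]
        obtain ⟨ay, hayC, hayd, haychain⟩ := key y hchain
        have hb := hCbd i ax haxC ay hayC haychain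
        have h6 : dist x y ≤ dist x ax + dist ax ay + dist ay y := dist_triangle4 _ _ _ _
        have h7 : dist ay y = dist y ay := dist_comm _ _
        rw [hDk]; linarith
    · intro x hx
      have hs := hCmult x hx
      by_cases hxR : x ∈ Rs
      · have hsub : insert (Fin.last k) (Fin.castSucc '' {i | x ∈ C i}) ⊆
            {j : Fin (k + 1) | x ∈ (Fin.snoc Fr Rs : Fin (k + 1) → Set X) j} := by
          intro j hj
          rcases Set.mem_insert_iff.1 hj with rfl | ⟨i, hi, rfl⟩
          · simp only [Set.mem_setOf_eq, Fin.snoc_last]; exact hxR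
          · simp only [Set.mem_setOf_eq, Fin.snoc_castSucc]
            exact ⟨hx, x, hi, by simp [hrX.le]⟩
        have h1 : (insert (Fin.last k) (Fin.castSucc '' {i | x ∈ C i})).ncard =
            (Fin.castSucc '' {i | x ∈ C i}).ncard + 1 := by
          refine Set.ncard_insert_of_notMem ?_ (Set.toFinite _)
          rintro ⟨i, _, hi⟩
          exact (Fin.castSucc_lt_last i).ne hi
        have h2 : (Fin.castSucc '' {i | x ∈ C i}).ncard = {i | x ∈ C i}.ncard :=
          Set.ncard_image_of_injective _ (Fin.castSucc_injective k)
        have h3 := Set.ncard_le_ncard hsub (Set.toFinite _)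
        omega
      · have hx' : ∃ i₀, (∃ a ∈ C i₀, dist x a ≤ rX) ∧ x ∉ C i₀ := by
          by_contra hcon
          push_neg at hcon
          exact hxR ⟨hx, fun i h => hcon i h⟩
        obtain ⟨i₀, hi₀a, hi₀n⟩ := hx'
        have hsub : Fin.castSucc '' insert i₀ {i | x ∈ C i} ⊆
            {j : Fin (k + 1) | x ∈ (Fin.snoc Fr Rs : Fin (k + 1) → Set X) j} := by
          rintro j ⟨i, hi, rfl⟩
          simp only [Set.mem_setOf_eq, Fin.snoc_castSucc]
          rcases Set.mem_insert_iff.1 hi with rfl | hi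
          · exact ⟨hx, hi₀a⟩
          · exact ⟨hx, x, hi, by simp [hrX.le]⟩
        have h1 : (insert i₀ {i | x ∈ C i}).ncard = {i | x ∈ C i}.ncard + 1 :=
          Set.ncard_insert_of_notMem hi₀n (Set.toFinite _)
        have h2 : (Fin.castSucc '' insert i₀ {i | x ∈ C i}).ncard =
            (insert i₀ {i | x ∈ C i}).ncard :=
          Set.ncard_image_of_injective _ (Fin.castSucc_injective k)
        have h3 := Set.ncard_le_ncard hsub (Set.toFinite _)
        omega
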